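/- If S = b·a^A is a finite nonempty subset of BS(1,r), where r ≥ 3 and A ⊆ ℤ is finite with |A| = k, then |S²| = |A + r∗A| ≥ max(4k − 4, 1) ≥ 3k − 2. -/

import Mathlib

open Pointwise

def BSRel (n : ℤ) : Set (FreeGroup Bool) :=
  {FreeGroup.of true * FreeGroup.of false * (FreeGroup.of false * FreeGroup.of true ^ n)⁻¹}

/-- The Baumslag–Solitar group `BS(1,n) = ⟨a, b ∣ a b = b aⁿ⟩`. -/
abbrev BS (n : ℤ) : Type := PresentedGroup (BSRel n)

noncomputable instance (n : ℤ) : DecidableEq (BS n) := Classical.decEq _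

/-- The generator `a` of `BS(1,n)`. -/
def bsa (n : ℤ) : BS n := PresentedGroup.of true

/-- The generator `b` of `BS(1,n)`. -/
def bsb (n : ℤ) : BS n := PresentedGroup.of false


section Rep

variable {r : ℤ} (hr : (r : ℚ) ≠ 0)

/-- map generators to affine permutations of ℚ : a = (+1), b = (* r⁻¹) -/
noncomputable def bsf (r : ℤ) (hr : (r : ℚ) ≠ 0) : Bool → Equiv.Perm ℚ :=
  fun x => if x then Equiv.addRight (1 : ℚ) else Equiv.mulRight₀ (r : ℚ)⁻¹ (inv_ne_zero hr)

lemma bsf_rel : ∀ w ∈ BSRel r, FreeGroup.lift (bsf r hr) w = 1 := by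
  intro w hw
  rcases hw with rfl
  simp only [map_mul, map_inv, FreeGroup.lift_apply_of, map_zpow]
  rw [mul_inv_eq_one]
  ext q
  simp [bsf, Equiv.Perm.mul_apply, Equiv.mulRight₀, mul_add, add_mul, mul_comm,
    inv_mul_cancel₀ hr]
  ring_nf
  rw [mul_inv_cancel₀ hr]

noncomputable def bsrep (r : ℤ) (hr : (r : ℚ) ≠ 0) : BS r →* Equiv.Perm ℚ :=
  PresentedGroup.toGroup (bsf_rel hr)

lemma bsrep_a : bsrep r hr (bsa r) = Equiv.addRight (1 : ℚ) := by
  simp [bsrep, bsa, PresentedGroup.toGroup.of, bsf]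

lemma bsrep_b : bsrep r hr (bsb r) = Equiv.mulRight₀ (r : ℚ)⁻¹ (inv_ne_zero hr) := by
  simp [bsrep, bsb, PresentedGroup.toGroup.of, bsf]

lemma bsrep_bba (m : ℤ) :
    (bsrep r hr (bsb r * bsb r * bsa r ^ m)) 0 = (m : ℚ) * ((r:ℚ)⁻¹ * (r:ℚ)⁻¹) := by
  rw [map_mul, map_mul, map_zpow, bsrep_a, bsrep_b]
  simp [Equiv.Perm.mul_apply, Equiv.mulRight₀, mul_assoc]

lemma bb_a_injective (hr0 : r ≠ 0) :
    Function.Injective (fun m : ℤ => bsb r * bsb r * bsa r ^ m) := by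
  have hr : (r : ℚ) ≠ 0 := Int.cast_ne_zero.mpr hr0
  intro m m' h
  have h2 := congrArg (fun z => (bsrep r hr z) 0) h
  simp only [bsrep_bba] at h2
  have hrr : ((r:ℚ)⁻¹ * (r:ℚ)⁻¹) ≠ 0 := by
    exact mul_ne_zero (inv_ne_zero hr) (inv_ne_zero hr)
  have := mul_right_cancel₀ hrr h2
  exact_mod_cast this

end Rep

section RelLemmas

variable {r : ℤ}

lemma bs_rel : bsa r * bsb r = bsb r * bsa r ^ r := by
  have hmem : (FreeGroup.of true * FreeGroup.of false *
      (FreeGroup.of false * FreeGroup.of true ^ r)⁻¹ : FreeGroup Bool) ∈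
      Subgroup.normalClosure (BSRel r) :=
    Subgroup.subset_normalClosure rfl
  have h1 : PresentedGroup.mk (BSRel r) (FreeGroup.of true * FreeGroup.of false *
      (FreeGroup.of false * FreeGroup.of true ^ r)⁻¹) = 1 :=
    (QuotientGroup.eq_one_iff _).mpr hmem
  rw [map_mul, map_mul, map_inv, map_mul, map_zpow, mul_inv_eq_one] at h1
  exact h1

lemma bs_pow_rel (x : ℤ) : bsa r ^ x * bsb r = bsb r * bsa r ^ (r * x) := by
  have key : (bsb r)⁻¹ * bsa r * bsb r = bsa r ^ r := by
    rw [mul_assoc, bs_rel, ← mul_assoc, inv_mul_cancel, one_mul]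
  have key2 : (bsb r)⁻¹ * bsa r ^ x * bsb r = ((bsb r)⁻¹ * bsa r * bsb r) ^ x := by
    induction x using Int.induction_on with
    | zero => simp
    | succ n ih =>
        rw [zpow_add, zpow_add, zpow_one, zpow_one, ← mul_assoc]
        rw [show (bsb r)⁻¹ * bsa r ^ (n:ℤ) * bsa r * bsb r
            = ((bsb r)⁻¹ * bsa r ^ (n:ℤ) * bsb r) * ((bsb r)⁻¹ * bsa r * bsb r) by group, ih]
    | pred n ih =>
        rw [zpow_sub, zpow_sub, zpow_one, zpow_one]
        rw [show (bsb r)⁻¹ * (bsa r ^ (-n:ℤ) * (bsa r)⁻¹) * bsb r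
            = ((bsb r)⁻¹ * bsa r ^ (-n:ℤ) * bsb r) * ((bsb r)⁻¹ * bsa r * bsb r)⁻¹ by group, ih]
  rw [key, ← zpow_mul, mul_comm r x] at key2
  have : bsa r ^ x * bsb r = bsb r * ((bsb r)⁻¹ * bsa r ^ x * bsb r) := by
    group
  rw [this, key2, zpow_mul, ← zpow_mul, mul_comm x r]

lemma bs_prod (x y : ℤ) :
    (bsb r * bsa r ^ x) * (bsb r * bsa r ^ y) = bsb r * bsb r * bsa r ^ (r * x + y) := by
  rw [zpow_add, mul_assoc, ← mul_assoc (bsa r ^ x), bs_pow_rel]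
  group

lemma b_a_injective (hr0 : r ≠ 0) :
    Function.Injective (fun m : ℤ => bsb r * bsa r ^ m) := by
  have hr : (r : ℚ) ≠ 0 := Int.cast_ne_zero.mpr hr0
  intro m m' h
  have h2 := congrArg (fun z => (bsrep r hr z) 0) h
  simp only [map_mul, map_zpow, bsrep_a, bsrep_b] at h2
  simp [Equiv.Perm.mul_apply, Equiv.mulRight₀] at h2
  rcases h2 with h2 | h2
  · exact_mod_cast h2
  · exact absurd h2 hr0

end RelLemmas

section Bridge

variable {r : ℤ}

lemma card_SS (hr0 : r ≠ 0) (A : Finset ℤ) :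
    ((A.image (fun x => bsb r * bsa r ^ x)) * (A.image (fun x => bsb r * bsa r ^ x))).card
      = (Finset.image₂ (fun x y => x + r * y) A A).card := by
  classical
  have h1 : (A.image (fun x => bsb r * bsa r ^ x)) * (A.image (fun x => bsb r * bsa r ^ x))
      = Finset.image₂ (fun x y => (bsb r * bsa r ^ x) * (bsb r * bsa r ^ y)) A A := by
    show Finset.image₂ (· * ·) _ _ = _
    rw [Finset.image₂_image_left, Finset.image₂_image_right]
  have h2 : Finset.image₂ (fun x y => (bsb r * bsa r ^ x) * (bsb r * bsa r ^ y)) A A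
      = Finset.image₂ (fun x y => bsb r * bsb r * bsa r ^ (r * x + y)) A A := by
    apply Finset.image₂_congr
    intro x hx y hy
    exact bs_prod x y
  have h3 : Finset.image₂ (fun x y => bsb r * bsb r * bsa r ^ (r * x + y)) A A
      = Finset.image (fun m => bsb r * bsb r * bsa r ^ m)
          (Finset.image₂ (fun x y => r * x + y) A A) := by
    rw [Finset.image_image₂]
  have h4 : Finset.image₂ (fun x y => r * x + y) A A
      = Finset.image₂ (fun x y => x + r * y) A A := by
    rw [Finset.image₂_swap]
    apply Finset.image₂_congr
    intro x hx y hy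
    ring
  rw [h1, h2, h3, Finset.card_image_of_injective _ (bb_a_injective hr0), h4]

end Bridge


section Tok

variable (e : ℕ → ℤ) (r : ℤ)

/-- token chooser, indexed by distance `m` from the last pair `q`.
`true` = L-token, `false` = U-token.  Pair `j` corresponds to `m = q - j`. -/
def tokD (q : ℕ) : ℕ → Bool
  | 0 => decide (e (q+1) - e q < 2*(e (q+2) - e (q+1)))
  | (m+1) =>
      (decide (e (q-m) - e (q-(m+1)) < 2*(e (q-m+1) - e (q-m)))) &&
      !((tokD q m == false) && decide (e (q-m+2) - e (q-(m+1)) = r * (e (q-m+1) - e (q-m))))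

variable {e r} {q : ℕ} (hr : 3 ≤ r) (hpos : ∀ j ≤ q+1, 0 < e (j+1) - e j)

include hr hpos in
lemma tokD_invariant : ∀ m ≤ q, tokD e r q m = false →
    e (q-m+2) - e (q-m+1) < e (q-m+1) - e (q-m) := by
  intro m
  induction m with
  | zero =>
    intro _ h0
    simp only [tokD, decide_eq_false_iff_not, not_lt, Nat.sub_zero] at h0 ⊢
    have h2 := hpos (q+1) (le_refl _)
    have e2 : q+1+1 = q+2 := by omega
    rw [e2] at h2
    omega
  | succ m ih =>
    intro hmq hf
    have hm : m ≤ q := by omega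
    have h1 : q - (m+1) + 1 = q - m := by omega
    have h2 : q - (m+1) + 2 = q - m + 1 := by omega
    have h3 : q - (m+1) + 3 = q - m + 2 := by omega
    rw [h2, h1]
    simp only [tokD, Bool.and_eq_false_iff, decide_eq_false_iff_not, not_lt,
      Bool.not_eq_false', Bool.and_eq_true, beq_iff_eq, decide_eq_true_eq] at hf
    rcases hf with hf | ⟨hU, hE⟩
    · have := hpos (q-m) (by omega)
      omega
    · have hIH := ih hm hU
      have hg1 : 0 < e (q-m+1) - e (q-m) := hpos (q-m) (by omega)
      -- hE : e (q-m+2) - e (q-(m+1)) = r * (e (q-m+1) - e (q-m))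
      nlinarith [hE, hIH, hg1, hr]

include hr hpos in
lemma tok_U_lt {j : ℕ} (hj : j ≤ q) (h : tokD e r q (q - j) = false) :
    e (j+2) - e (j+1) < e (j+1) - e j := by
  have := tokD_invariant hr hpos (q - j) (by omega) h
  have h1 : q - (q - j) = j := by omega
  rw [h1] at this
  exact this

include hpos in
lemma tok_L_lt {j : ℕ} (hj : j ≤ q) (h : tokD e r q (q - j) = true) :
    e (j+1) - e j < 2 * (e (j+2) - e (j+1)) := by
  rcases eq_or_lt_of_le hj with rfl | hlt
  · rw [Nat.sub_self] at h
    simp only [tokD, decide_eq_true_eq] at h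
    exact h
  · obtain ⟨m, hm⟩ : ∃ m, q - j = m + 1 := ⟨q - j - 1, by omega⟩
    rw [hm] at h
    simp only [tokD, Bool.and_eq_true, decide_eq_true_eq] at h
    have h1 : q - (m+1) = j := by omega
    have h2 : q - m = j + 1 := by omega
    rw [h1, h2] at h
    exact h.1

lemma tok_nocollide {j : ℕ} (hj : j < q) (hL : tokD e r q (q - j) = true)
    (hU : tokD e r q (q - (j+1)) = false) :
    e (j+3) - e j ≠ r * (e (j+2) - e (j+1)) := by
  obtain ⟨m, hm⟩ : ∃ m, q - j = m + 1 ∧ m = q - (j+1) := ⟨q - (j+1), by omega, rfl⟩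
  obtain ⟨hm1, hm2⟩ := hm
  rw [hm1] at hL
  rw [← hm2] at hU
  simp only [tokD, Bool.and_eq_true, Bool.not_eq_true', Bool.and_eq_false_iff,
    beq_eq_false_iff_ne, ne_eq, decide_eq_false_iff_not, decide_eq_true_eq] at hL
  have h1 : q - (m+1) = j := by omega
  have h2 : q - m = j + 1 := by omega
  rw [h1, h2] at hL
  rcases hL.2 with hc | hc
  · exact absurd hU hc
  · have h3 : j + 1 + 2 = j + 3 := by omega
    rw [← h3]
    exact hc

end Tok

open Finset in
theorem sumset_lb (r : ℤ) (hr : 3 ≤ r) (A : Finset ℤ) :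
    4 * (A.card : ℤ) - 4 ≤ ((Finset.image₂ (fun x y => x + r * y) A A).card : ℤ) := by
  classical
  by_cases hk2 : A.card ≤ 1
  · have h1 : (A.card : ℤ) ≤ 1 := by exact_mod_cast hk2
    have h2 : (0:ℤ) ≤ ((Finset.image₂ (fun x y => x + r * y) A A).card : ℤ) :=
      Int.natCast_nonneg _
    linarith
  push_neg at hk2
  set k := A.card with hkdef
  have hk2' : 2 ≤ k := hk2
  set n := k - 1 with hndef
  have hnk : n < k := by omega
  have hn1 : 1 ≤ n := by omega
  have hkn : k = n + 1 := by omega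
  set q := n - 2 with hqdef
  set e : ℕ → ℤ := fun i => if h : i < k then ((A.orderIsoOfFin rfl) ⟨i, h⟩ : ℤ) else 0
    with hedef
  have emem : ∀ i, i < k → e i ∈ A := by
    intro i h
    simp only [hedef, dif_pos h]
    exact Finset.coe_mem _
  have emono : ∀ i j, i < j → j < k → e i < e j := by
    intro i j hij hj
    have hi : i < k := lt_trans hij hj
    simp only [hedef, dif_pos hi, dif_pos hj]
    have := (A.orderIsoOfFin rfl).strictMono (show (⟨i, hi⟩ : Fin k) < ⟨j, hj⟩ from hij)
    exact_mod_cast this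
  have hpos : ∀ j, j + 1 < k → 0 < e (j+1) - e j := by
    intro j h
    exact sub_pos.mpr (emono j (j+1) (by omega) h)
  set tk : ℕ → Bool := fun j => tokD e r q (q - j) with htk
  set val : ℕ → ℤ := fun j => if tk j = false then e (j+2) + r * e j else e j + r * e (j+2)
    with hval
  set bx : ℕ → ℕ := fun j => if tk j = false then j else j + 1 with hbx
  set v1 : ℕ → ℤ := fun b => e b + r * e b with hv1
  set v2 : ℕ → ℤ := fun b => e (b+1) + r * e b with hv2
  set v3 : ℕ → ℤ := fun b => e b + r * e (b+1) with hv3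
  set pairs := Finset.range (n - 1) with hpairs
  set SS : ℕ → Finset ℤ := fun b =>
    insert (v1 b) (insert (v2 b) (insert (v3 b)
      ((pairs.filter (fun j => bx j = b)).image val))) with hSS
  -- hpos in the form needed for token lemmas (valid when n ≥ 2)
  have hpos' : 2 ≤ n → ∀ j, j ≤ q + 1 → 0 < e (j+1) - e j := by
    intro hn2 j hj
    apply hpos
    omega
  -- F1
  have hF1 : ∀ b, b + 1 < k → v1 b < v2 b ∧ v2 b < v3 b ∧ v3 b < v1 (b+1) := by
    intro b hb
    have gb := hpos b hb
    refine ⟨by simp only [hv1, hv2]; linarith, ?_, by simp only [hv3, hv1]; linarith⟩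
    simp only [hv2, hv3]
    nlinarith [gb, hr]
  -- F2
  have hF2 : ∀ j ∈ pairs, bx j + 1 < k ∧ v2 (bx j) < val j ∧ val j < v3 (bx j) := by
    intro j hj
    rw [hpairs, Finset.mem_range] at hj
    have hn2 : 2 ≤ n := by omega
    have hjq : j ≤ q := by omega
    have hp' := hpos' hn2
    have hg0 : 0 < e (j+1) - e j := hp' j (by omega)
    have hg1 : 0 < e (j+2) - e (j+1) := hp' (j+1) (by omega)
    by_cases htok : tk j = false
    · have hU := tok_U_lt hr hp' hjq htok
      have hbxj : bx j = j := by simp [hbx, htok]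
      rw [hbxj]
      refine ⟨by omega, ?_, ?_⟩
      · simp only [hval, if_pos htok, hv2]
        linarith
      · simp only [hval, if_pos htok, hv3]
        nlinarith [hU, hg0, hr]
    · have htokT : tk j = true := by
        revert htok; cases tk j <;> simp
      have hL := tok_L_lt hp' hjq htokT
      have hbxj : bx j = j + 1 := by simp [hbx, htok]
      rw [hbxj]
      refine ⟨by omega, ?_, ?_⟩
      · simp only [hval, if_neg htok, hv2]
        nlinarith [hL, hg1, hr]
      · simp only [hval, if_neg htok, hv3]
        linarith
  -- F4 : v1 monotone
  have hF4 : ∀ b b', b < b' → b' ≤ n → v1 b < v1 b' := by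
    intro b b' hb hb'
    have h1 := emono b b' hb (by omega)
    have h2 : r * e b < r * e b' := by
      apply mul_lt_mul_of_pos_left h1
      linarith
    simp only [hv1]
    linarith
  have hF4' : ∀ b b', b ≤ b' → b' ≤ n → v1 b ≤ v1 b' := by
    intro b b' hb hb'
    rcases eq_or_lt_of_le hb with rfl | h
    · exact le_refl _
    · exact le_of_lt (hF4 b b' h hb')
  -- F3 : SS b lives in [v1 b, v1 (b+1))
  have hF3 : ∀ b, b < n → ∀ z ∈ SS b, v1 b ≤ z ∧ z < v1 (b+1) := by
    intro b hb z hz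
    have hbk : b + 1 < k := by omega
    obtain ⟨h12, h23, h34⟩ := hF1 b hbk
    simp only [hSS, Finset.mem_insert, Finset.mem_image] at hz
    rcases hz with rfl | rfl | rfl | ⟨j, hjf, rfl⟩
    · exact ⟨le_refl _, by linarith⟩
    · exact ⟨by linarith, by linarith⟩
    · exact ⟨by linarith, by linarith⟩
    · rw [Finset.mem_filter] at hjf
      obtain ⟨hjp, hjb⟩ := hjf
      obtain ⟨hbk', hlo, hhi⟩ := hF2 j hjp
      rw [hjb] at hlo hhi
      exact ⟨by linarith, by linarith⟩
  -- pairwise disjoint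
  have hdisj : ∀ x ∈ Finset.range n, ∀ y ∈ Finset.range n, x ≠ y → Disjoint (SS x) (SS y) := by
    have key : ∀ x y, x < y → y < n → Disjoint (SS x) (SS y) := by
      intro x y hxy hy
      rw [Finset.disjoint_left]
      intro z hzx hzy
      have h1 := hF3 x (by omega) z hzx
      have h2 := hF3 y hy z hzy
      have h3 : v1 (x+1) ≤ v1 y := hF4' (x+1) y (by omega) (by omega)
      linarith [h1.2, h2.1]
    intro x hx y hy hxy
    rw [Finset.mem_range] at hx hy
    rcases lt_or_gt_of_ne hxy with h | h
    · exact key x y h hy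
    · exact (key y x h hx).symm
  -- F7 : card of SS b
  have hF7 : ∀ b, b < n →
      (SS b).card = 3 + ((pairs.filter (fun j => bx j = b)).image val).card := by
    intro b hb
    have hbk : b + 1 < k := by omega
    obtain ⟨h12, h23, h34⟩ := hF1 b hbk
    have htokmem : ∀ z ∈ (pairs.filter (fun j => bx j = b)).image val,
        v2 b < z ∧ z < v3 b := by
      intro z hz
      rw [Finset.mem_image] at hz
      obtain ⟨j, hjf, rfl⟩ := hz
      rw [Finset.mem_filter] at hjf
      obtain ⟨hjp, hjb⟩ := hjf
      obtain ⟨_, hlo, hhi⟩ := hF2 j hjp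
      rw [hjb] at hlo hhi
      exact ⟨hlo, hhi⟩
    have hv3n : v3 b ∉ (pairs.filter (fun j => bx j = b)).image val := by
      intro hmem
      have := (htokmem _ hmem).2
      linarith
    have hv2n : v2 b ∉ insert (v3 b) ((pairs.filter (fun j => bx j = b)).image val) := by
      rw [Finset.mem_insert]
      rintro (h | hmem)
      · linarith
      · have := (htokmem _ hmem).1
        linarith
    have hv1n : v1 b ∉ insert (v2 b)
        (insert (v3 b) ((pairs.filter (fun j => bx j = b)).image val)) := by
      rw [Finset.mem_insert, Finset.mem_insert]
      rintro (h | h | hmem)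
      · linarith
      · linarith
      · have := (htokmem _ hmem).1
        linarith
    rw [hSS]
    rw [Finset.card_insert_of_notMem hv1n, Finset.card_insert_of_notMem hv2n,
        Finset.card_insert_of_notMem hv3n]
    omega
  -- injectivity of val on each fiber
  have hinj : ∀ b, b < n → ∀ j ∈ pairs.filter (fun j => bx j = b),
      ∀ j' ∈ pairs.filter (fun j => bx j = b), val j = val j' → j = j' := by
    intro b hb j hj j' hj' hvv
    rw [Finset.mem_filter, hpairs, Finset.mem_range] at hj hj'
    obtain ⟨hjp, hjb⟩ := hj
    obtain ⟨hjp', hjb'⟩ := hj'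
    by_contra hne
    -- both are in {b-1, b} with distinct tokens; wlog j' = j + 1, tk j = true, tk j' = false
    have hn2 : 2 ≤ n := by omega
    have hp' := hpos' hn2
    have main : ∀ c c', c ∈ pairs → c' ∈ pairs → bx c = b → bx c' = b →
        tk c = true → tk c' = false → val c = val c' → False := by
      intro c c' hcp hcp' hcb hcb' htc htc' hv
      rw [hpairs, Finset.mem_range] at hcp hcp'
      have hbc : c + 1 = b := by simpa [hbx, htc] using hcb
      have hbc' : c' = b := by simpa [hbx, htc'] using hcb'
      have hcc' : c' = c + 1 := by omega
      have hcq : c < q := by omega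
      have hnc := tok_nocollide (e := e) (r := r) hcq htc (by rw [← hcc']; exact htc')
      apply hnc
      have htc'' : tk (c+1) = false := by rw [← hcc']; exact htc'
      rw [hcc'] at hv
      simp only [hval] at hv
      rw [if_neg (by simp [htc] : ¬ tk c = false), if_pos htc''] at hv
      have h3 : c + 1 + 2 = c + 3 := by omega
      rw [h3] at hv
      linarith
    by_cases htj : tk j = false
    · by_cases htj' : tk j' = false
      · -- both U : bx = id
        apply hne
        have h1 : j = b := by simpa [hbx, htj] using hjb
        have h2 : j' = b := by simpa [hbx, htj'] using hjb'
        omega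
      · exact main j' j (by rw [hpairs, Finset.mem_range]; exact hjp')
          (by rw [hpairs, Finset.mem_range]; exact hjp)
          hjb' hjb (by revert htj'; cases tk j' <;> simp) htj hvv.symm
    · by_cases htj' : tk j' = false
      · exact main j j' (by rw [hpairs, Finset.mem_range]; exact hjp)
          (by rw [hpairs, Finset.mem_range]; exact hjp')
          hjb hjb' (by revert htj; cases tk j <;> simp) htj' hvv
      · apply hne
        have h1 : j + 1 = b := by simpa [hbx, htj] using hjb
        have h2 : j' + 1 = b := by simpa [hbx, htj'] using hjb'
        omega
  have hfib : ∑ b ∈ Finset.range n, ((pairs.filter (fun j => bx j = b)).card) = pairs.card := by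
    symm
    apply Finset.card_eq_sum_card_fiberwise
    intro j hj
    rw [Finset.coe_range, Set.mem_Iio]
    have := (hF2 j hj).1
    omega
  have himg : ∀ b, b < n → ((pairs.filter (fun j => bx j = b)).image val).card
      = (pairs.filter (fun j => bx j = b)).card := by
    intro b hb
    apply Finset.card_image_of_injOn
    intro j hj j' hj' hvv
    exact hinj b hb j hj j' hj' hvv
  set T := (Finset.range n).biUnion SS with hT
  have hTcard : T.card = 3 * n + (n - 1) := by
    rw [hT, Finset.card_biUnion hdisj]
    have hsum : ∑ b ∈ Finset.range n, (SS b).card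
        = ∑ b ∈ Finset.range n, (3 + (pairs.filter (fun j => bx j = b)).card) := by
      apply Finset.sum_congr rfl
      intro b hb
      rw [Finset.mem_range] at hb
      rw [hF7 b hb, himg b hb]
    rw [hsum, Finset.sum_add_distrib, Finset.sum_const, Finset.card_range, hfib, hpairs,
      Finset.card_range, smul_eq_mul, mul_comm]
  have htop : v1 n ∉ T := by
    intro hmem
    rw [hT, Finset.mem_biUnion] at hmem
    obtain ⟨b, hb, hzb⟩ := hmem
    rw [Finset.mem_range] at hb
    have h1 := (hF3 b hb _ hzb).2
    have h2 := hF4' (b+1) n (by omega) (le_refl n)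
    linarith
  have hsub : insert (v1 n) T ⊆ Finset.image₂ (fun x y => x + r * y) A A := by
    intro z hz
    rw [Finset.mem_insert] at hz
    rw [Finset.mem_image₂]
    rcases hz with rfl | hz
    · exact ⟨e n, emem n hnk, e n, emem n hnk, rfl⟩
    · rw [hT, Finset.mem_biUnion] at hz
      obtain ⟨b, hbm, hzb⟩ := hz
      rw [Finset.mem_range] at hbm
      have hbk : b + 1 < k := by omega
      rw [hSS] at hzb
      simp only [Finset.mem_insert, Finset.mem_image] at hzb
      rcases hzb with rfl | rfl | rfl | ⟨j, hjf, rfl⟩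
      · exact ⟨e b, emem b (by omega), e b, emem b (by omega), rfl⟩
      · exact ⟨e (b+1), emem _ hbk, e b, emem b (by omega), rfl⟩
      · exact ⟨e b, emem b (by omega), e (b+1), emem _ hbk, rfl⟩
      · rw [Finset.mem_filter] at hjf
        obtain ⟨hjp, _⟩ := hjf
        rw [hpairs, Finset.mem_range] at hjp
        have hj2 : j + 2 < k := by omega
        by_cases htok : tk j = false
        · refine ⟨e (j+2), emem _ hj2, e j, emem j (by omega), ?_⟩
          simp [hval, htok]
        · refine ⟨e j, emem j (by omega), e (j+2), emem _ hj2, ?_⟩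
          simp [hval, htok]
  have hcard : 4 * n ≤ (Finset.image₂ (fun x y => x + r * y) A A).card := by
    have h1 : (insert (v1 n) T).card = T.card + 1 := Finset.card_insert_of_notMem htop
    have h2 := Finset.card_le_card hsub
    omega
  have hcast : (4 * n : ℤ) ≤ ((Finset.image₂ (fun x y => x + r * y) A A).card : ℤ) := by
    exact_mod_cast hcard
  have hkc : (k : ℤ) = (n : ℤ) + 1 := by exact_mod_cast hkn
  linarith


theorem stmt11 (r : ℤ) (hr : 3 ≤ r) (A : Finset ℤ) (hA : A.Nonempty) (k : ℕ)
    (hk : A.card = k) (S : Finset (BS r))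
    (hS : S = A.image (fun x => bsb r * bsa r ^ x)) :
    ((S * S).card : ℤ) = (Finset.image₂ (fun x y => x + r * y) A A).card ∧
    max (4 * (k : ℤ) - 4) 1 ≤ ((S * S).card : ℤ) ∧
    3 * (k : ℤ) - 2 ≤ max (4 * (k : ℤ) - 4) 1 := by
  have hr0 : r ≠ 0 := by omega
  have hcardeq : ((S * S).card : ℤ) = (Finset.image₂ (fun x y => x + r * y) A A).card := by
    rw [hS]
    exact_mod_cast card_SS hr0 A
  have hk1 : 1 ≤ k := by
    rw [← hk]
    exact Finset.card_pos.mpr hA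
  refine ⟨hcardeq, ?_, ?_⟩
  · rw [hcardeq]
    apply max_le
    · have := sumset_lb r hr A
      rw [hk] at this
      exact this
    · have hne : (Finset.image₂ (fun x y => x + r * y) A A).Nonempty :=
        Finset.Nonempty.image₂ hA hA
      have := Finset.card_pos.mpr hne
      exact_mod_cast this
  · rcases eq_or_lt_of_le hk1 with h1 | h2
    · apply le_max_of_le_right
      rw [← h1]
      norm_num
    · apply le_max_of_le_left
      have : (2 : ℤ) ≤ (k : ℤ) := by exact_mod_cast h2
      linarith
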